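/- Let R > 0, r ∈ (0,R], γ ∈ (0,1/r], and let Φ : [0,R] → ℝ be a nondecreasing function with Φ(0) = 1. Let S be the set of all t ∈ [0,R−r] such that Φ(t+r) ≥ Φ(t) + γ·∫_0^t Φ(x) dx. Then Φ(R) ≥ e^{η·μ(S) − 1}, where η = √(γ/((e−1)·r)) and μ(S) is the Lebesgue measure of S. -/

import Mathlib

open MeasureTheory Set

private lemma exp_le_linear {x : ℝ} (h0 : 0 ≤ x) (h1 : x ≤ 1) :
    Real.exp x ≤ 1 + (Real.exp 1 - 1) * x := by
  have h := convexOn_exp.2 (mem_univ (0:ℝ)) (mem_univ (1:ℝ))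
      (by linarith : (0:ℝ) ≤ 1 - x) h0 (by ring)
  simp only [smul_eq_mul, mul_zero, mul_one, zero_add, Real.exp_zero] at h
  calc Real.exp x ≤ 1 - x + x * Real.exp 1 := h
    _ = 1 + (Real.exp 1 - 1) * x := by ring

set_option maxHeartbeats 1000000 in
private lemma ineq_key {a q b k : ℝ} (ha0 : 0 < a) (ha1 : a < 1) (hq : 1 < q)
    (hk : k = min ((q - 1) * a) (1 - a) / 2) (hb0 : 0 ≤ b) (hb1 : b ≤ 1) :
    Real.exp (a + b - 1 + k) ≤ 1 + (Real.exp 1 - 1) * q * a * b := by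
  have he1 : (1:ℝ) < Real.exp 1 := by
    have := Real.exp_one_gt_d9; linarith
  have hk1 : 2 * k ≤ (q - 1) * a := by rw [hk]; have := min_le_left ((q-1)*a) (1-a); linarith
  have hk2 : 2 * k ≤ 1 - a := by rw [hk]; have := min_le_right ((q-1)*a) (1-a); linarith
  have hk0 : 0 < k := by
    rw [hk]
    have h1 : 0 < (q-1)*a := by nlinarith
    have h2 : 0 < 1 - a := by linarith
    have := lt_min h1 h2; linarith
  set x := a + b - 1 + k with hx
  rcases le_or_gt x 0 with hxle | hxgt
  · have h1 : Real.exp x ≤ 1 := Real.exp_le_one_iff.2 hxle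
    nlinarith [mul_nonneg (mul_nonneg (mul_nonneg (by linarith : (0:ℝ) ≤ Real.exp 1 - 1) (by linarith : (0:ℝ) ≤ q)) ha0.le) hb0]
  · have hxa : x ≤ a + k := by rw [hx]; linarith
    have hx1 : x ≤ 1 := by linarith
    have hlin := exp_le_linear hxgt.le hx1
    have hqab : x ≤ q * a * b := by
      have hb : b = x + 1 - a - k := by rw [hx]; ring
      rcases le_or_gt 1 (q * a) with hqa | hqa
      · nlinarith
      · nlinarith
    nlinarith

set_option maxHeartbeats 1000000 in
/-- Let `R > 0`, `r ∈ (0,R]`, `γ ∈ (0,1/r]`, and let `Φ : [0,R] → ℝ`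
be nondecreasing with `Φ(0) = 1`. Let `S` be the set of all `t ∈ [0,R−r]` with
`Φ(t+r) ≥ Φ(t) + γ ∫_0^t Φ(x) dx`. Then `Φ(R) ≥ e^{η μ(S) − 1}`, where
`η = √(γ/((e−1)r))` and `μ` is Lebesgue measure. -/
theorem stmt9 (R r γ : ℝ) (hR : 0 < R) (hr : r ∈ Set.Ioc 0 R) (hγ : γ ∈ Set.Ioc 0 (1 / r))
    (Φ : ℝ → ℝ) (hmono : MonotoneOn Φ (Set.Icc 0 R)) (h0 : Φ 0 = 1)
    (S : Set ℝ)
    (hS : S = {t : ℝ | t ∈ Set.Icc 0 (R - r) ∧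
      Φ t + γ * ∫ x in (0 : ℝ)..t, Φ x ≤ Φ (t + r)}) :
    Real.exp (Real.sqrt (γ / ((Real.exp 1 - 1) * r)) * (MeasureTheory.volume S).toReal - 1)
      ≤ Φ R := by
  obtain ⟨hr0, hrR⟩ := hr
  obtain ⟨hγ0, hγr⟩ := hγ
  have he1 : (1:ℝ) < Real.exp 1 := by
    have := Real.exp_one_gt_d9; linarith
  have he2 : (2:ℝ) < Real.exp 1 := by
    have := Real.exp_one_gt_d9; linarith
  have hγr1 : γ * r ≤ 1 := (le_div_iff₀ hr0).1 hγr
  set η := Real.sqrt (γ / ((Real.exp 1 - 1) * r)) with hη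
  set M := (volume S).toReal with hM
  have hM0 : 0 ≤ M := ENNReal.toReal_nonneg
  have hη0 : 0 < η := Real.sqrt_pos.2 (div_pos hγ0 (mul_pos (by linarith) hr0))
  have hSsub : S ⊆ Icc 0 (R - r) := by rw [hS]; intro t ht; exact ht.1
  have hΦ1 : ∀ t ∈ Icc 0 R, (1:ℝ) ≤ Φ t := by
    intro t ht
    rw [← h0]
    exact hmono (left_mem_Icc.2 hR.le) ht ht.1
  -- the cumulative measure function s
  set s : ℝ → ℝ := fun t => (volume (S ∩ Icc 0 t)).toReal with hsdef
  have hfin : ∀ t : ℝ, volume (S ∩ Icc 0 t) ≠ ⊤ := by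
    intro t
    exact ne_top_of_le_ne_top (by simp) (measure_mono inter_subset_right)
  have hsmono : Monotone s := by
    intro x y hxy
    exact ENNReal.toReal_le_toReal (hfin x) (hfin y) |>.2
      (measure_mono (inter_subset_inter_right _ (Icc_subset_Icc_right hxy)))
  have hsnn : ∀ t, 0 ≤ s t := fun t => ENNReal.toReal_nonneg
  have hs0 : s 0 = 0 := by
    have : volume (S ∩ Icc 0 (0:ℝ)) ≤ volume (Icc (0:ℝ) 0) := measure_mono inter_subset_right
    simp only [hsdef]
    rw [ENNReal.toReal_eq_zero_iff]
    left
    simpa using le_antisymm (by simpa using this) zero_le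
  have hsle : ∀ t, 0 ≤ t → s t ≤ t := by
    intro t ht
    have h1 : volume (S ∩ Icc 0 t) ≤ volume (Icc 0 t) := measure_mono inter_subset_right
    have := ENNReal.toReal_le_toReal (hfin t) (by simp) |>.2 h1
    simpa [Real.volume_Icc, ht] using this
  have hslip : ∀ x y : ℝ, x ≤ y → s y ≤ s x + (y - x) := by
    intro x y hxy
    have hsub : S ∩ Icc 0 y ⊆ (S ∩ Icc 0 x) ∪ Ioc x y := by
      rintro z ⟨hzS, hz0, hzy⟩
      rcases le_or_gt z x with h | h
      · exact Or.inl ⟨hzS, hz0, h⟩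
      · exact Or.inr ⟨h, hzy⟩
    have h1 : volume (S ∩ Icc 0 y) ≤ volume (S ∩ Icc 0 x) + volume (Ioc x y) :=
      le_trans (measure_mono hsub) (measure_union_le _ _)
    have h2 := ENNReal.toReal_le_toReal (hfin y)
      (ENNReal.add_ne_top.2 ⟨hfin x, by simp⟩) |>.2 h1
    rw [ENNReal.toReal_add (hfin x) (by simp), Real.volume_Ioc,
      ENNReal.toReal_ofReal (by linarith)] at h2
    exact h2
  have hscont : Continuous s := by
    refine LipschitzWith.continuous (K := 1) (LipschitzWith.of_dist_le_mul ?_)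
    intro x y
    rw [Real.dist_eq, Real.dist_eq, NNReal.coe_one, one_mul]
    rcases le_total x y with h | h
    · rw [abs_of_nonpos (by linarith [hsmono h]), abs_of_nonpos (by linarith)]
      linarith [hslip x y h]
    · rw [abs_of_nonneg (by linarith [hsmono h]), abs_of_nonneg (by linarith)]
      linarith [hslip y x h]
  have hsR' : s R = M := by
    simp only [hsdef, hM]
    congr 1
    rw [inter_eq_left.2]
    intro t ht
    have := hSsub ht
    exact ⟨this.1, by linarith [this.2]⟩
  have hsR : s R = M := hsR'
  clear_value s
  -- the key claim, for every η' < η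
  have key : ∀ η' : ℝ, 0 < η' → η' < η → Real.exp (η' * M - 1) ≤ Φ R := by
    intro η' hη'0 hη'η
    have hη2 : η' ^ 2 < γ / ((Real.exp 1 - 1) * r) := by
      have h1 : 0 ≤ γ / ((Real.exp 1 - 1) * r) := (div_pos hγ0 (mul_pos (by linarith) hr0)).le
      nlinarith [Real.sq_sqrt h1, Real.sqrt_nonneg (γ / ((Real.exp 1 - 1) * r))]
    have hη2' : η' ^ 2 * ((Real.exp 1 - 1) * r) < γ := (lt_div_iff₀ (mul_pos (by linarith) hr0)).1 hη2
    have harlt : η' * r < 1 := by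
      have hh := mul_lt_mul_of_pos_right hη2' hr0
      have h21 : (η' * r) ^ 2 < 1 := by
        nlinarith [mul_nonneg (sq_nonneg (η' * r)) (by linarith : (0:ℝ) ≤ Real.exp 1 - 2)]
      nlinarith [sq_nonneg (η' * r - 1)]
    set a := η' * r with ha
    have ha0 : 0 < a := by positivity
    have ha1 : a < 1 := harlt
    set q := γ / ((Real.exp 1 - 1) * r * η' ^ 2) with hqdef
    have hq1 : 1 < q := by
      rw [hqdef, lt_div_iff₀ (mul_pos (mul_pos (by linarith) hr0) (pow_pos hη'0 2))]
      nlinarith [hη2']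
    have hqa : γ = (Real.exp 1 - 1) * q * a * η' := by
      rw [hqdef, ha]
      have hne : (Real.exp 1 - 1) * r * η' ^ 2 ≠ 0 :=
        ne_of_gt (mul_pos (mul_pos (by linarith) hr0) (pow_pos hη'0 2))
      field_simp [hne, sub_ne_zero.2 (ne_of_gt he1)]
    set k := min ((q - 1) * a) (1 - a) / 2 with hk
    have hk1 : 2 * k ≤ (q - 1) * a := by rw [hk]; have := min_le_left ((q-1)*a) (1-a); linarith
    have hk2 : 2 * k ≤ 1 - a := by rw [hk]; have := min_le_right ((q-1)*a) (1-a); linarith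
    have hk0 : 0 < k := by
      rw [hk]
      have h1 : 0 < (q-1)*a := by nlinarith
      have h2 : 0 < 1 - a := by linarith
      have := lt_min h1 h2; linarith
    set g : ℝ → ℝ := fun u => max 1 (Real.exp (η' * u - 1)) with hg
    have hg1 : ∀ u, 1 ≤ g u := fun u => le_max_left _ _
    have hgmono : Monotone g := by
      intro u v huv
      refine max_le_max le_rfl (Real.exp_le_exp.2 ?_)
      have := mul_le_mul_of_nonneg_left huv hη'0.le
      linarith
    have hgcont : Continuous g :=
      continuous_const.max (Real.continuous_exp.comp ((continuous_const.mul continuous_id).sub continuous_const))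
    have hgint : ∀ p p' : ℝ, IntervalIntegrable g volume p p' :=
      fun p p' => hgcont.intervalIntegrable p p'
    have hgsint : ∀ p p' : ℝ, IntervalIntegrable (fun x => g (s x)) volume p p' :=
      fun p p' => (hgcont.comp hscont).intervalIntegrable p p'
    -- the main claim by continuous induction
    have claim : ∀ t ∈ Icc 0 R, g (s t) ≤ Φ t := by
      by_contra hcon
      push_neg at hcon
      obtain ⟨tb, htbIcc, htbΦ⟩ := hcon
      set B := {t : ℝ | t ∈ Icc 0 R ∧ Φ t < g (s t)} with hB
      have hBne : B.Nonempty := ⟨tb, htbIcc, htbΦ⟩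
      have hBbd : BddBelow B := ⟨0, fun x hx => hx.1.1⟩
      set t₀ := sInf B with ht₀
      obtain ⟨t, htB, htlt⟩ : ∃ t ∈ B, t < t₀ + r :=
        exists_lt_of_csInf_lt hBne (by linarith [ht₀])
      obtain ⟨htIcc, htΦ⟩ := htB
      have ht₀tb : t₀ ≤ tb := csInf_le hBbd ⟨htbIcc, htbΦ⟩
      have hgood : ∀ x, 0 ≤ x → x < t₀ → g (s x) ≤ Φ x := by
        intro x hx0 hxlt
        by_contra hbad
        push_neg at hbad
        have hxB : x ∈ B := ⟨⟨hx0, by linarith [htbIcc.2]⟩, hbad⟩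
        exact absurd (csInf_le hBbd hxB) (by linarith)
      have hΦt1 : 1 ≤ Φ t := hΦ1 t htIcc
      have hst1 : 1 < η' * s t := by
        have h1 : 1 < g (s t) := lt_of_le_of_lt hΦt1 htΦ
        have h2 : 1 < Real.exp (η' * s t - 1) := by
          rcases lt_max_iff.1 h1 with h | h
          · exact absurd h (lt_irrefl _)
          · exact h
        by_contra hle
        push_neg at hle
        exact absurd h2 (not_lt.2 (Real.exp_le_one_iff.2 (by linarith)))
      have hrt : r < t := by
        by_contra hle
        push_neg at hle
        have h1 : s t ≤ t := hsle t htIcc.1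
        have h2 : η' * s t ≤ η' * r := mul_le_mul_of_nonneg_left (by linarith) hη'0.le
        rw [← ha] at h2
        linarith
      set σ := s t with hσ
      set m := s (t - r) with hm
      have hmσ : σ - r ≤ m := by
        have := hslip (t - r) t (by linarith)
        linarith
      set ε' := k / η' with hε'
      have hε'0 : 0 < ε' := by positivity
      have hη'ε' : η' * ε' = k := by rw [hε']; field_simp [ne_of_gt hη'0]
      have hmε : 0 < m - ε' := by
        -- η'(m − ε') > 1 − a − k ≥ (1−a)/2 > 0
        have h1 : 1 - a - k ≤ η' * m - η' * ε' := by
          rw [hη'ε']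
          nlinarith only [hmσ, hst1, hη'0, ha]
        nlinarith only [h1, hk2, hk0, hη'0, hη'ε']
      set A := Icc 0 (t - r) ∩ s ⁻¹' (Iic (m - ε')) with hA
      have hAne : A.Nonempty := ⟨0, ⟨le_refl 0, by linarith⟩, by simp [hs0]; linarith⟩
      have hAcomp : IsCompact A := isCompact_Icc.inter_right (isClosed_Iic.preimage hscont)
      set c := sSup A with hc
      have hcA : c ∈ A := hAcomp.sSup_mem hAne
      have hsc : s c ≤ m - ε' := hcA.2
      have hct : c ≤ t - r := hcA.1.2
      have hc0 : 0 ≤ c := hcA.1.1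
      obtain ⟨t', ht'S, hct', ht'tr⟩ : ∃ t', t' ∈ S ∧ c < t' ∧ t' ≤ t - r := by
        by_contra hno
        push_neg at hno
        have hsub : S ∩ Icc 0 (t - r) ⊆ S ∩ Icc 0 c := by
          rintro x ⟨hxS, hx0, hxtr⟩
          refine ⟨hxS, hx0, ?_⟩
          by_contra hxc
          push_neg at hxc
          exact absurd hxtr (not_le.2 (hno x hxS hxc))
        have h1 : m ≤ s c := by
          rw [hm, hsdef]
          exact ENNReal.toReal_le_toReal (hfin _) (hfin _) |>.2 (measure_mono hsub)
        linarith only [h1, hsc, hε'0]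
      have hst' : m - ε' < s t' := by
        by_contra hle
        push_neg at hle
        have ht'0 : (0:ℝ) ≤ t' := (hSsub ht'S).1
        have ht'A : t' ∈ A := ⟨⟨ht'0, ht'tr⟩, hle⟩
        exact absurd (le_csSup hAcomp.bddAbove ht'A) (not_le.2 hct')
      set σ' := s t' with hσ'
      have hσ'σ : σ' ≤ σ := hsmono (by linarith : t' ≤ t)
      have hσ'lb : σ - r - ε' < σ' := by linarith
      have ht'0 : (0:ℝ) ≤ t' := (hSsub ht'S).1
      have ht'Rr : t' ≤ R - r := (hSsub ht'S).2
      have hσ'0 : 0 ≤ σ' := hsnn t'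
      have hσ't' : σ' ≤ t' := hsle t' ht'0
      have hSineq : Φ t' + γ * ∫ x in (0:ℝ)..t', Φ x ≤ Φ (t' + r) := by
        rw [hS] at ht'S
        exact ht'S.2
      have ht'good : ∀ x ∈ Icc 0 t', g (s x) ≤ Φ x := by
        intro x hx
        exact hgood x hx.1 (by linarith [hx.2])
      have hΦint : IntervalIntegrable Φ volume 0 t' := by
        apply MonotoneOn.intervalIntegrable
        apply hmono.mono
        rw [uIcc_of_le ht'0]
        exact Icc_subset_Icc le_rfl (by linarith)
      -- F(t') ≥ ∫_0^{σ'} g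
      have hF1 : (∫ u in (0:ℝ)..σ', g u) ≤ ∫ x in (0:ℝ)..t', Φ x := by
        have h1 : (∫ x in (0:ℝ)..t', g (s x)) ≤ ∫ x in (0:ℝ)..t', Φ x :=
          intervalIntegral.integral_mono_on ht'0 (hgsint 0 t') hΦint ht'good
        have hshiftint : IntervalIntegrable (fun x => g (x + (σ' - t'))) volume 0 t' :=
          (hgcont.comp (continuous_id.add continuous_const)).intervalIntegrable 0 t'
        have h2 : (∫ x in (0:ℝ)..t', g (x + (σ' - t'))) ≤ ∫ x in (0:ℝ)..t', g (s x) := by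
          apply intervalIntegral.integral_mono_on ht'0 hshiftint (hgsint 0 t')
          intro x hx
          apply hgmono
          have := hslip x t' hx.2
          linarith
        have h3 : (∫ x in (0:ℝ)..t', g (x + (σ' - t'))) = ∫ u in (σ' - t')..σ', g u := by
          rw [intervalIntegral.integral_comp_add_right g (σ' - t')]
          norm_num
        have h4 : (∫ u in (0:ℝ)..σ', g u) ≤ ∫ u in (σ' - t')..σ', g u := by
          have hadj : (∫ u in (σ' - t')..(0:ℝ), g u) + ∫ u in (0:ℝ)..σ', g u
              = ∫ u in (σ' - t')..σ', g u :=
            intervalIntegral.integral_add_adjacent_intervals (hgint _ _) (hgint _ _)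
          have hpos : 0 ≤ ∫ u in (σ' - t')..(0:ℝ), g u :=
            intervalIntegral.integral_nonneg (by linarith) (fun u _ => le_trans zero_le_one (hg1 u))
          linarith
        linarith
      have hΦtmono : Φ (t' + r) ≤ Φ t :=
        hmono ⟨by linarith, by linarith [htIcc.2]⟩ htIcc (by linarith)
      have hΦt' : 1 ≤ Φ t' := hΦ1 t' ⟨ht'0, by linarith⟩
      have hησ : η' * σ ≤ a + η' * σ' + k := by
        have : η' * σ ≤ η' * (σ' + r + ε') := by nlinarith only [hσ'lb, hη'0]
        rw [mul_add, mul_add, hη'ε'] at this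
        linarith
      have hfinal : g σ ≤ Φ t := by
        rcases le_or_gt (η' * σ') 1 with hbl | hbg
        · -- case B : small σ'
          have hI : σ' ≤ ∫ u in (0:ℝ)..σ', g u := by
            calc σ' = ∫ u in (0:ℝ)..σ', (1:ℝ) := by simp
              _ ≤ ∫ u in (0:ℝ)..σ', g u :=
                intervalIntegral.integral_mono_on hσ'0 intervalIntegrable_const (hgint _ _)
                  (fun u _ => hg1 u)
          have hkey := ineq_key ha0 ha1 hq1 hk (mul_nonneg hη'0.le hσ'0) hbl
          have hγσ' : γ * σ' = (Real.exp 1 - 1) * q * a * (η' * σ') := by rw [hqa]; ring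
          have hexp : Real.exp (η' * σ - 1) ≤ 1 + γ * σ' := by
            calc Real.exp (η' * σ - 1) ≤ Real.exp (a + η' * σ' - 1 + k) :=
                  Real.exp_le_exp.2 (by linarith)
              _ ≤ 1 + (Real.exp 1 - 1) * q * a * (η' * σ') := hkey
              _ = 1 + γ * σ' := by rw [hγσ']
          have hintγ : γ * σ' ≤ γ * ∫ x in (0:ℝ)..t', Φ x :=
            mul_le_mul_of_nonneg_left (le_trans hI hF1) hγ0.le
          apply max_le hΦt1
          calc Real.exp (η' * σ - 1) ≤ 1 + γ * σ' := hexp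
            _ ≤ Φ t' + γ * ∫ x in (0:ℝ)..t', Φ x := by linarith
            _ ≤ Φ (t' + r) := hSineq
            _ ≤ Φ t := hΦtmono
        · -- case A : large σ'
          have h1η' : 1 / η' ≤ σ' := by
            rw [div_le_iff₀ hη'0]
            linarith only [hbg, mul_comm η' σ']
          have hI : Real.exp (η' * σ' - 1) / η' ≤ ∫ u in (0:ℝ)..σ', g u := by
            have hsplit : (∫ u in (0:ℝ)..(1/η'), g u) + ∫ u in (1/η')..σ', g u
                = ∫ u in (0:ℝ)..σ', g u :=
              intervalIntegral.integral_add_adjacent_intervals (hgint _ _) (hgint _ _)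
            have h1 : 1 / η' ≤ ∫ u in (0:ℝ)..(1/η'), g u := by
              calc 1/η' = ∫ u in (0:ℝ)..(1/η'), (1:ℝ) := by simp
                _ ≤ ∫ u in (0:ℝ)..(1/η'), g u :=
                  intervalIntegral.integral_mono_on (by positivity) intervalIntegrable_const
                    (hgint _ _) (fun u _ => hg1 u)
            have hexpint : IntervalIntegrable (fun u => Real.exp (η' * u - 1)) volume (1/η') σ' :=
              (Real.continuous_exp.comp ((continuous_const.mul continuous_id).sub continuous_const)).intervalIntegrable _ _
            have hcalc : (∫ u in (1/η')..σ', Real.exp (η' * u - 1))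
                = (Real.exp (η' * σ' - 1) - 1) / η' := by
              have e1 : (∫ u in (1/η')..σ', Real.exp (η' * u - 1))
                  = η'⁻¹ • ∫ v in (η' * (1/η'))..(η' * σ'), Real.exp (v - 1) :=
                intervalIntegral.integral_comp_mul_left (fun v => Real.exp (v - 1)) (ne_of_gt hη'0)
              have e2 : (∫ v in (η' * (1/η'))..(η' * σ'), Real.exp (v - 1))
                  = ∫ w in (η' * (1/η') - 1)..(η' * σ' - 1), Real.exp w :=
                intervalIntegral.integral_comp_sub_right Real.exp 1
              rw [e1, e2, _root_.integral_exp]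
              have : η' * (1/η') = 1 := by field_simp
              rw [this]
              simp [smul_eq_mul]
              ring
            have h2 : (Real.exp (η' * σ' - 1) - 1) / η' ≤ ∫ u in (1/η')..σ', g u := by
              rw [← hcalc]
              exact intervalIntegral.integral_mono_on h1η' hexpint (hgint _ _)
                (fun u _ => le_max_right _ _)
            have : Real.exp (η' * σ' - 1) / η' = 1/η' + (Real.exp (η' * σ' - 1) - 1) / η' := by
              field_simp
              ring
            linarith
          have hΦt'2 : Real.exp (η' * σ' - 1) ≤ Φ t' :=
            le_trans (le_max_right _ _) (ht'good t' ⟨ht'0, le_refl t'⟩)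
          have hkey := ineq_key ha0 ha1 hq1 hk (zero_le_one) (le_refl (1:ℝ))
          -- exp (a + 1 - 1 + k) ≤ 1 + (e-1) q a
          have hkey' : Real.exp (a + k) ≤ 1 + (Real.exp 1 - 1) * q * a := by
            have : a + 1 - 1 + k = a + k := by ring
            rw [this] at hkey
            simpa using hkey
          have hγI : γ * (Real.exp (η' * σ' - 1) / η')
              = (Real.exp 1 - 1) * q * a * Real.exp (η' * σ' - 1) := by
            rw [hqa]
            field_simp
          have hintγ : γ * (Real.exp (η' * σ' - 1) / η') ≤ γ * ∫ x in (0:ℝ)..t', Φ x :=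
            mul_le_mul_of_nonneg_left (le_trans hI hF1) hγ0.le
          apply max_le hΦt1
          have hexppos : 0 < Real.exp (η' * σ' - 1) := Real.exp_pos _
          calc Real.exp (η' * σ - 1)
              ≤ Real.exp ((η' * σ' - 1) + (a + k)) := Real.exp_le_exp.2 (by linarith)
            _ = Real.exp (η' * σ' - 1) * Real.exp (a + k) := Real.exp_add _ _
            _ ≤ Real.exp (η' * σ' - 1) * (1 + (Real.exp 1 - 1) * q * a) :=
                mul_le_mul_of_nonneg_left hkey' hexppos.le
            _ = Real.exp (η' * σ' - 1)
                + (Real.exp 1 - 1) * q * a * Real.exp (η' * σ' - 1) := by ring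
            _ = Real.exp (η' * σ' - 1) + γ * (Real.exp (η' * σ' - 1) / η') := by rw [hγI]
            _ ≤ Φ t' + γ * ∫ x in (0:ℝ)..t', Φ x := by linarith
            _ ≤ Φ (t' + r) := hSineq
            _ ≤ Φ t := hΦtmono
      exact absurd hfinal (not_le.2 htΦ)
    have hRc := claim R ⟨hR.le, le_refl R⟩
    calc Real.exp (η' * M - 1) ≤ g (s R) := by rw [hsR]; exact le_max_right _ _
      _ ≤ Φ R := hRc
  -- pass to the limit η' → η
  rcases eq_or_lt_of_le hM0 with hM0' | hMpos
  · have h := key (η/2) (by linarith) (by linarith)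
    rw [← hM0'] at h ⊢
    simpa using h
  · by_contra hcon
    push_neg at hcon
    have hΦR1 : (1:ℝ) ≤ Φ R := hΦ1 R ⟨hR.le, le_refl R⟩
    have hΦR0 : (0:ℝ) < Φ R := by linarith
    set η₁ := (1 + Real.log (Φ R)) / M with hη₁
    have hlog0 : 0 ≤ Real.log (Φ R) := Real.log_nonneg hΦR1
    have hη₁pos : 0 < η₁ := div_pos (by linarith) hMpos
    have hη₁η : η₁ < η := by
      have hlt : Real.log (Φ R) < η * M - 1 := by
        have := Real.log_lt_log hΦR0 hcon
        rwa [Real.log_exp] at this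
      rw [hη₁, div_lt_iff₀ hMpos]
      linarith
    set η₂ := (η₁ + η) / 2 with hη₂
    have h2 := key η₂ (by linarith) (by linarith)
    have hΦeq : Φ R = Real.exp (η₁ * M - 1) := by
      have : η₁ * M - 1 = Real.log (Φ R) := by
        rw [hη₁]
        field_simp
        ring
      rw [this, Real.exp_log hΦR0]
    have hlt2 : Φ R < Real.exp (η₂ * M - 1) := by
      rw [hΦeq]
      apply Real.exp_lt_exp.2
      nlinarith
    linarith
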